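/- Suppose b(+)/a(+) < N and b(−)/a(−) < N, and fix λ > 0. Then there exists ε > 0, depending only on N, a, b, c and λ, such that for every switching signal ξ with mean growth rate λ and every solution (S, I) of the switched SIRS system with S(0) > 0, I(0) > 0 and S(0) + I(0) ≤ N, one has liminf_{t→∞} I(t) > ε; consequently the system is permanent along such solutions: ε ≤ liminf_{t→∞} S(t) ≤ limsup_{t→∞} S(t) ≤ 1/ε and ε ≤ liminf_{t→∞} I(t) ≤ limsup_{t→∞} I(t) ≤ 1/ε (after shrinking ε if necessary). -/

import Mathlib

open Filter MeasureTheory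

/-- The state space of environments: `true` is `+`, `false` is `−`. -/
abbrev Env := Bool

/-- `ξ` is locally constant (as a function on `[0,∞)`) at the point `t`. -/
def ContPt (ξ : ℝ → Env) (t : ℝ) : Prop :=
  ∀ᶠ s in nhdsWithin t (Set.Ici (0:ℝ)), ξ s = ξ t

/-- A switching signal: right-continuous, piecewise constant,
with locally finite set of discontinuities in `[0,∞)`. -/
def IsSwitchingSignal (ξ : ℝ → Env) : Prop :=
  (∀ t : ℝ, 0 ≤ t → ∀ᶠ s in nhdsWithin t (Set.Ici t), ξ s = ξ t) ∧
  (∀ T : ℝ, {t : ℝ | 0 ≤ t ∧ t ≤ T ∧ ¬ ContPt ξ t}.Finite)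

/-- `(S, I)` is a solution of the switched SIRS system driven by `ξ`:
continuous on `[0,∞)` and satisfying the SIRS equations at every
`t ≥ 0` which is not a discontinuity of `ξ`. -/
def IsSIRSSolution (N : ℝ) (a b c : Env → ℝ) (ξ : ℝ → Env) (S I : ℝ → ℝ) : Prop :=
  ContinuousOn S (Set.Ici (0:ℝ)) ∧ ContinuousOn I (Set.Ici (0:ℝ)) ∧
  ∀ t : ℝ, 0 ≤ t → ContPt ξ t →
    HasDerivWithinAt S (-(a (ξ t) * S t * I t) + c (ξ t) * (N - S t - I t)) (Set.Ici (0:ℝ)) t ∧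
    HasDerivWithinAt I (a (ξ t) * S t * I t - b (ξ t) * I t) (Set.Ici (0:ℝ)) t

/-- `ξ` has mean growth rate `lam`:
`lim_{t→∞} (1/t) ∫₀ᵗ (a(ξ(s))·N − b(ξ(s))) ds = lam`. -/
def HasMeanGrowthRate (N : ℝ) (a b : Env → ℝ) (ξ : ℝ → Env) (lam : ℝ) : Prop :=
  Tendsto (fun t : ℝ => (1 / t) * ∫ s in (0:ℝ)..t, (a (ξ s) * N - b (ξ s)))
    atTop (nhds lam)

section SIRSHelpers
open Set

private lemma mono0 {f : ℝ → ℝ} {x y : ℝ} (hxy : x ≤ y) (hf : ContinuousOn f (Icc x y))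
    (h : ∀ t ∈ Ioo x y, ∃ d, 0 ≤ d ∧ HasDerivAt f d t) : f x ≤ f y := by
  rcases eq_or_lt_of_le hxy with rfl | hlt
  · exact le_refl _
  · have hm : MonotoneOn f (Icc x y) := by
      apply monotoneOn_of_deriv_nonneg (convex_Icc x y) hf
      · intro t ht
        rw [interior_Icc] at ht
        obtain ⟨d, _, hd⟩ := h t ht
        exact hd.differentiableAt.differentiableWithinAt
      · intro t ht
        rw [interior_Icc] at ht
        obtain ⟨d, hd0, hd⟩ := h t ht
        rw [hd.deriv]; exact hd0
    exact hm (left_mem_Icc.2 hxy) (right_mem_Icc.2 hxy) hxy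

private lemma monoE (E : Finset ℝ) : ∀ (f : ℝ → ℝ) (x y : ℝ), x ≤ y →
    ContinuousOn f (Icc x y) →
    (∀ t ∈ Ioo x y, t ∉ E → ∃ d, 0 ≤ d ∧ HasDerivAt f d t) → f x ≤ f y := by
  induction E using Finset.strongInduction with
  | _ E ih =>
    intro f x y hxy hf h
    by_cases hE : ∃ e ∈ E, e ∈ Ioo x y
    · obtain ⟨e, heE, hex⟩ := hE
      have h1 : f x ≤ f e := by
        apply ih (E.erase e) (Finset.erase_ssubset heE) f x e hex.1.le
          (hf.mono (Icc_subset_Icc_right hex.2.le))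
        intro t ht htE
        refine h t ⟨ht.1, ht.2.trans hex.2⟩ fun htE' => htE ?_
        exact Finset.mem_erase.2 ⟨ne_of_lt ht.2, htE'⟩
      have h2 : f e ≤ f y := by
        apply ih (E.erase e) (Finset.erase_ssubset heE) f e y hex.2.le
          (hf.mono (Icc_subset_Icc_left hex.1.le))
        intro t ht htE
        refine h t ⟨hex.1.trans ht.1, ht.2⟩ fun htE' => htE ?_
        exact Finset.mem_erase.2 ⟨(ne_of_lt ht.1).symm, htE'⟩
      exact h1.trans h2
    · exact mono0 hxy hf fun t ht => h t ht fun htE => hE ⟨t, htE, ht⟩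

private lemma mono_good {G : Set ℝ} (Gfin : ∀ y : ℝ, {t : ℝ | 0 ≤ t ∧ t ≤ y ∧ t ∉ G}.Finite)
    {f : ℝ → ℝ} {x y : ℝ} (hx : 0 ≤ x) (hxy : x ≤ y) (hf : ContinuousOn f (Icc x y))
    (h : ∀ t ∈ Ioo x y, t ∈ G → ∃ d, 0 ≤ d ∧ HasDerivAt f d t) : f x ≤ f y := by
  apply monoE (Gfin y).toFinset f x y hxy hf
  intro t ht htE
  apply h t ht
  by_contra hG
  exact htE ((Gfin y).mem_toFinset.2 ⟨hx.trans ht.1.le, ht.2.le, hG⟩)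


private lemma trap_good {G : Set ℝ} (Gfin : ∀ y : ℝ, {t : ℝ | 0 ≤ t ∧ t ≤ y ∧ t ∉ G}.Finite)
    {f : ℝ → ℝ} {L x z : ℝ} (hx : 0 ≤ x) (hz : x ≤ z)
    (hf : ContinuousOn f (Ici 0)) (hLz : L ≤ f z)
    (h : ∀ t, x < t → t ∈ G → f t < L → ∃ d, 0 ≤ d ∧ HasDerivAt f d t) :
    ∀ w, z ≤ w → L ≤ f w := by
  intro w hw
  by_contra hfw
  push_neg at hfw
  have hz0 : (0:ℝ) ≤ z := hx.trans hz
  have hsub : Icc z w ⊆ Ici (0:ℝ) := fun t ht => hz0.trans ht.1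
  have hclosed : IsClosed (Icc z w ∩ f ⁻¹' Ici L) :=
    (hf.mono hsub).preimage_isClosed_of_isClosed isClosed_Icc isClosed_Ici
  have hne : (Icc z w ∩ f ⁻¹' Ici L).Nonempty := ⟨z, ⟨le_refl z, hw⟩, hLz⟩
  have hbdd : BddAbove (Icc z w ∩ f ⁻¹' Ici L) := BddAbove.mono Set.inter_subset_left bddAbove_Icc
  obtain ⟨t₀, ⟨⟨hzt₀, ht₀w⟩, hLt₀'⟩, ht₀max⟩ :
      ∃ t₀, t₀ ∈ Icc z w ∩ f ⁻¹' Ici L ∧ ∀ t ∈ Icc z w ∩ f ⁻¹' Ici L, t ≤ t₀ :=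
    ⟨sSup _, hclosed.csSup_mem hne hbdd, fun t ht => le_csSup hbdd ht⟩
  have hLt₀ : L ≤ f t₀ := hLt₀'
  have hlt : ∀ t ∈ Ioo t₀ w, f t < L := by
    intro t ht
    by_contra hge
    push_neg at hge
    exact absurd (ht₀max t ⟨⟨hzt₀.trans ht.1.le, ht.2.le⟩, hge⟩) (not_le.2 ht.1)
  have hmono : f t₀ ≤ f w := by
    refine mono_good Gfin (hz0.trans hzt₀) ht₀w
      (hf.mono (fun t ht => (hz0.trans hzt₀).trans ht.1)) ?_
    intro t ht htG
    exact h t (lt_of_le_of_lt (hz.trans hzt₀) ht.1) htG (hlt t ht)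
  linarith

private lemma persist_good {G : Set ℝ} (Gfin : ∀ y : ℝ, {t : ℝ | 0 ≤ t ∧ t ≤ y ∧ t ∉ G}.Finite)
    {f : ℝ → ℝ} {L U μ x : ℝ} (hμ : 0 < μ) (hx : 0 ≤ x)
    (hf : ContinuousOn f (Ici 0))
    (hU : ∀ t, x ≤ t → f t ≤ U)
    (h : ∀ t, x < t → t ∈ G → f t < L → ∃ d, μ ≤ d ∧ HasDerivAt f d t) :
    ∃ t₀, x ≤ t₀ ∧ ∀ t, t₀ ≤ t → L ≤ f t := by
  have hesc : ∃ z, x ≤ z ∧ L ≤ f z := by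
    by_contra hno
    push_neg at hno
    obtain ⟨y, hy⟩ : ∃ y : ℝ, y = x + (U - f x) / μ + 1 := ⟨_, rfl⟩
    have hUfx : f x ≤ U := hU x le_rfl
    have hxy : x ≤ y := by
      have : (0:ℝ) ≤ (U - f x) / μ := div_nonneg (by linarith) hμ.le
      linarith
    have hgmono : f x - μ * x ≤ f y - μ * y := by
      have hcont : ContinuousOn (fun t => f t - μ * t) (Icc x y) :=
        (hf.mono (fun t ht => hx.trans ht.1)).sub
          ((continuous_const.mul continuous_id).continuousOn)
      refine mono_good Gfin hx hxy hcont ?_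
      intro t ht htG
      obtain ⟨d, hd, hD⟩ := h t ht.1 htG (hno t ht.1.le)
      have hμt : HasDerivAt (fun t : ℝ => μ * t) μ t := by
        simpa using (hasDerivAt_id t).const_mul μ
      exact ⟨d - μ, by linarith, hD.sub hμt⟩
    have hμy : μ * y - μ * x = U - f x + μ := by
      have hμ' : μ ≠ 0 := hμ.ne'
      have hd : μ * ((U - f x) / μ) = U - f x := by field_simp
      rw [hy]
      linarith [hd]
    have hUy : f y ≤ U := hU y hxy
    linarith
  obtain ⟨z, hxz, hLz⟩ := hesc
  refine ⟨z, hxz, trap_good Gfin hx hxz hf hLz ?_⟩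
  intro t ht htG hft
  obtain ⟨d, hd, hD⟩ := h t ht htG hft
  exact ⟨d, hμ.le.trans hd, hD⟩

private lemma pos_good {G : Set ℝ} (Gfin : ∀ y : ℝ, {t : ℝ | 0 ≤ t ∧ t ≤ y ∧ t ∉ G}.Finite)
    {f : ℝ → ℝ} {x y K : ℝ} (hx : 0 ≤ x) (hxy : x ≤ y)
    (hf : ContinuousOn f (Icc x y))
    (h : ∀ t ∈ Ioo x y, t ∈ G → 0 ≤ f t → ∃ d, -(K * f t) ≤ d ∧ HasDerivAt f d t)
    (h0 : 0 < f x) : 0 < f y := by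
  by_contra hy0
  push_neg at hy0
  have hclosed : IsClosed (Icc x y ∩ f ⁻¹' Iic 0) :=
    hf.preimage_isClosed_of_isClosed isClosed_Icc isClosed_Iic
  have hne : (Icc x y ∩ f ⁻¹' Iic 0).Nonempty := ⟨y, ⟨hxy, le_refl y⟩, hy0⟩
  have hbdd : BddBelow (Icc x y ∩ f ⁻¹' Iic 0) := BddBelow.mono Set.inter_subset_left bddBelow_Icc
  obtain ⟨t₀, ⟨⟨hxt₀, ht₀y⟩, ht₀0'⟩, ht₀min⟩ :
      ∃ t₀, t₀ ∈ Icc x y ∩ f ⁻¹' Iic 0 ∧ ∀ t ∈ Icc x y ∩ f ⁻¹' Iic 0, t₀ ≤ t :=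
    ⟨sInf _, hclosed.csInf_mem hne hbdd, fun t ht => csInf_le hbdd ht⟩
  have ht₀0 : f t₀ ≤ 0 := ht₀0'
  have hpos : ∀ t ∈ Ico x t₀, 0 < f t := by
    intro t ht
    by_contra hle
    push_neg at hle
    exact absurd (ht₀min t ⟨⟨ht.1, ht.2.le.trans ht₀y⟩, hle⟩) (not_le.2 ht.2)
  have hmono : f x * Real.exp (K * x) ≤ f t₀ * Real.exp (K * t₀) := by
    refine mono_good Gfin hx hxt₀
      ((hf.mono (Icc_subset_Icc_right ht₀y)).mul
        ((Real.continuous_exp.comp (continuous_const.mul continuous_id)).continuousOn)) ?_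
    intro t ht htG
    have htpos : 0 < f t := hpos t ⟨ht.1.le, ht.2⟩
    obtain ⟨d, hd, hD⟩ := h t ⟨ht.1, ht.2.trans_le ht₀y⟩ htG htpos.le
    have hE : HasDerivAt (fun t : ℝ => Real.exp (K * t)) (Real.exp (K * t) * K) t := by
      simpa using (HasDerivAt.exp ((hasDerivAt_id t).const_mul K))
    refine ⟨d * Real.exp (K * t) + f t * (Real.exp (K * t) * K), ?_, hD.mul hE⟩
    have he : 0 < Real.exp (K * t) := Real.exp_pos _
    nlinarith
  have he1 : 0 < Real.exp (K * x) := Real.exp_pos _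
  have he2 : 0 < Real.exp (K * t₀) := Real.exp_pos _
  nlinarith

end SIRSHelpers

set_option maxHeartbeats 1000000 in
/-- if both states are supercritical and `λ > 0`, then there is
`ε > 0` (depending only on `N, a, b, c, λ`) such that along every positive
solution `liminf I > ε`, and the system is permanent with constant `ε`. -/
theorem sirs_permanence
    (N : ℝ) (hN : 0 < N) (a b c : Env → ℝ)
    (ha : ∀ σ, 0 < a σ) (hb : ∀ σ, 0 < b σ) (hc : ∀ σ, 0 < c σ)
    (hsupp : b true / a true < N) (hsupm : b false / a false < N)
    (lam : ℝ) (hlam : 0 < lam) :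
    ∃ ε : ℝ, 0 < ε ∧
      ∀ (ξ : ℝ → Env), IsSwitchingSignal ξ → HasMeanGrowthRate N a b ξ lam →
      ∀ (S I : ℝ → ℝ), IsSIRSSolution N a b c ξ S I →
      0 < S 0 → 0 < I 0 → S 0 + I 0 ≤ N →
      ε < Filter.liminf I Filter.atTop ∧
      (ε ≤ Filter.liminf S Filter.atTop ∧
        Filter.liminf S Filter.atTop ≤ Filter.limsup S Filter.atTop ∧
        Filter.limsup S Filter.atTop ≤ 1 / ε) ∧
      (ε ≤ Filter.liminf I Filter.atTop ∧
        Filter.liminf I Filter.atTop ≤ Filter.limsup I Filter.atTop ∧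
        Filter.limsup I Filter.atTop ≤ 1 / ε) := by
  
  classical
  -- constants
  obtain ⟨A, hAdef⟩ : ∃ A : ℝ, A = max (a true) (a false) := ⟨_, rfl⟩
  obtain ⟨B, hBdef⟩ : ∃ B : ℝ, B = max (b true) (b false) := ⟨_, rfl⟩
  obtain ⟨Cm, hCmdef⟩ : ∃ Cm : ℝ, Cm = min (c true) (c false) := ⟨_, rfl⟩
  obtain ⟨CM, hCMdef⟩ : ∃ CM : ℝ, CM = max (c true) (c false) := ⟨_, rfl⟩
  obtain ⟨bm, hbmdef⟩ : ∃ bm : ℝ, bm = min (b true) (b false) := ⟨_, rfl⟩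
  obtain ⟨m, hmdef⟩ : ∃ m : ℝ, m = min (a true * N - b true) (a false * N - b false) := ⟨_, rfl⟩
  have haσ : ∀ σ, a σ ≤ A := by intro σ; rw [hAdef]; cases σ
                                · exact le_max_right _ _
                                · exact le_max_left _ _
  have hbσ : ∀ σ, b σ ≤ B := by intro σ; rw [hBdef]; cases σ
                                · exact le_max_right _ _
                                · exact le_max_left _ _
  have hcσl : ∀ σ, Cm ≤ c σ := by intro σ; rw [hCmdef]; cases σ
                                  · exact min_le_right _ _
                                  · exact min_le_left _ _
  have hcσu : ∀ σ, c σ ≤ CM := by intro σ; rw [hCMdef]; cases σ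
                                  · exact le_max_right _ _
                                  · exact le_max_left _ _
  have hbmσ : ∀ σ, bm ≤ b σ := by intro σ; rw [hbmdef]; cases σ
                                  · exact min_le_right _ _
                                  · exact min_le_left _ _
  have hmσ : ∀ σ, m ≤ a σ * N - b σ := by intro σ; rw [hmdef]; cases σ
                                          · exact min_le_right _ _
                                          · exact min_le_left _ _
  have hA0 : 0 < A := lt_of_lt_of_le (ha true) (haσ true)
  have hB0 : 0 < B := lt_of_lt_of_le (hb true) (hbσ true)
  have hCm0 : 0 < Cm := by rw [hCmdef]; exact lt_min (hc true) (hc false)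
  have hCM0 : 0 < CM := lt_of_lt_of_le (hc true) (hcσu true)
  have hbm0 : 0 < bm := by rw [hbmdef]; exact lt_min (hb true) (hb false)
  have hm0 : 0 < m := by
    rw [hmdef]
    have h1 : b true < N * a true := (div_lt_iff₀ (ha true)).1 hsupp
    have h2 : b false < N * a false := (div_lt_iff₀ (ha false)).1 hsupm
    apply lt_min <;> linarith
  obtain ⟨α, hαdef⟩ : ∃ α : ℝ, α = (B + m) / (Cm * N) := ⟨_, rfl⟩
  have hα0 : 0 < α := by rw [hαdef]; exact div_pos (by linarith) (mul_pos hCm0 hN)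
  obtain ⟨K, hKdef⟩ : ∃ K : ℝ, K = A + α * B := ⟨_, rfl⟩
  have hK0 : 0 < K := by rw [hKdef]; nlinarith [mul_pos hα0 hB0]
  obtain ⟨δ, hδdef⟩ : ∃ δ : ℝ, δ = m / (2 * K) := ⟨_, rfl⟩
  have hδ0 : 0 < δ := by rw [hδdef]; exact div_pos hm0 (by linarith)
  obtain ⟨ε₁, hε₁def⟩ : ∃ ε₁ : ℝ, ε₁ = δ * Real.exp (-(α * N)) := ⟨_, rfl⟩
  have hε₁0 : 0 < ε₁ := by rw [hε₁def]; exact mul_pos hδ0 (Real.exp_pos _)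
  obtain ⟨q, hqdef⟩ : ∃ q : ℝ, q = ε₁ * bm / (2 * CM) := ⟨_, rfl⟩
  have hq0 : 0 < q := by rw [hqdef]; exact div_pos (mul_pos hε₁0 hbm0) (by linarith)
  obtain ⟨sstar, hsdef⟩ : ∃ s : ℝ, s = Cm * q / (2 * (A * N)) := ⟨_, rfl⟩
  have hs0 : 0 < sstar := by
    rw [hsdef]; exact div_pos (mul_pos hCm0 hq0) (by linarith [mul_pos hA0 hN])
  obtain ⟨ε, hεdef⟩ : ∃ ε : ℝ, ε = min (min ε₁ sstar) (1 / N) / 2 := ⟨_, rfl⟩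
  have hmin0 : 0 < min (min ε₁ sstar) (1 / N) := lt_min (lt_min hε₁0 hs0) (one_div_pos.2 hN)
  have hε0 : 0 < ε := by rw [hεdef]; linarith
  have hαc : ∀ σ, b σ + m ≤ α * c σ * N := by
    intro σ
    have h1 : (b σ + m) * Cm ≤ (B + m) * c σ :=
      mul_le_mul (by linarith [hbσ σ]) (hcσl σ) hCm0.le (by linarith)
    have h2 : (b σ + m) * Cm * N ≤ (B + m) * c σ * N :=
      mul_le_mul_of_nonneg_right h1 hN.le
    rw [hαdef, div_mul_eq_mul_div, div_mul_eq_mul_div, le_div_iff₀ (mul_pos hCm0 hN)]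
    linarith [h2]
  refine ⟨ε, hε0, ?_⟩
  intro ξ hsig _ S I hsol hS0 hI0 hSI0
  obtain ⟨hScont, hIcont, hode⟩ := hsol
  have Gfin : ∀ y : ℝ, {t : ℝ | 0 ≤ t ∧ t ≤ y ∧ t ∉ {t : ℝ | ContPt ξ t}}.Finite :=
    fun y => hsig.2 y
  have hds : ∀ t, 0 < t → t ∈ {t : ℝ | ContPt ξ t} →
      HasDerivAt S (-(a (ξ t) * S t * I t) + c (ξ t) * (N - S t - I t)) t :=
    fun t ht hg => ((hode t ht.le hg).1).hasDerivAt (Ici_mem_nhds ht)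
  have hdi : ∀ t, 0 < t → t ∈ {t : ℝ | ContPt ξ t} →
      HasDerivAt I (a (ξ t) * S t * I t - b (ξ t) * I t) t :=
    fun t ht hg => ((hode t ht.le hg).2).hasDerivAt (Ici_mem_nhds ht)
  -- Stage 1 : positivity of I
  have hIpos : ∀ t, 0 ≤ t → 0 < I t := by
    intro y hy
    obtain ⟨MS, hMS⟩ := (isCompact_Icc (a := (0:ℝ)) (b := y)).exists_bound_of_continuousOn
      (hScont.mono (fun t ht => ht.1))
    refine pos_good Gfin (K := A * max MS 0 + B) le_rfl hy
      (hIcont.mono (fun t ht => ht.1)) ?_ hI0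
    intro t ht htG hIt
    refine ⟨_, ?_, hdi t ht.1 htG⟩
    have h1 : -(max MS 0) ≤ S t := by
      have h := hMS t ⟨ht.1.le, ht.2.le⟩
      rw [Real.norm_eq_abs] at h
      linarith [(abs_le.1 h).1, le_max_left MS 0]
    have h2 : -(A * max MS 0) ≤ a (ξ t) * S t := by
      linarith [mul_nonneg (sub_nonneg.2 (haσ (ξ t))) (le_max_right MS 0),
        mul_nonneg (ha (ξ t)).le (by linarith : (0:ℝ) ≤ S t + max MS 0)]
    have h3 : b (ξ t) ≤ B := hbσ _
    linarith [mul_le_mul_of_nonneg_right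
      (by linarith : -(A * max MS 0 + B) ≤ a (ξ t) * S t - b (ξ t)) hIt]
  -- Stage 2 : S + I ≤ N
  have hPle : ∀ t, 0 ≤ t → S t + I t ≤ N := by
    have htrap := trap_good Gfin (f := fun t => N - (S t + I t)) (L := 0) (x := 0) (z := 0)
      le_rfl le_rfl (continuousOn_const.sub (hScont.add hIcont)) (by simpa using hSI0) ?_
    · intro t ht
      have := htrap t ht
      linarith
    · intro t ht htG hneg
      have hneg' : N - (S t + I t) < 0 := hneg
      have hIt := hIpos t ht.le
      refine ⟨-(c (ξ t) * (N - S t - I t) - b (ξ t) * I t), ?_, ?_⟩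
      · linarith [mul_pos (hc (ξ t)) (by linarith : (0:ℝ) < S t + I t - N),
          mul_pos (hb (ξ t)) hIt]
      · have hD := (hasDerivAt_const t N).sub ((hds t ht htG).add (hdi t ht htG))
        exact hD.congr_deriv (by ring)
  -- Stage 3 : positivity of S
  have hSpos : ∀ t, 0 ≤ t → 0 < S t := by
    intro y hy
    obtain ⟨MI, hMI⟩ := (isCompact_Icc (a := (0:ℝ)) (b := y)).exists_bound_of_continuousOn
      (hIcont.mono (fun t ht => ht.1))
    refine pos_good Gfin (K := A * max MI 0) le_rfl hy
      (hScont.mono (fun t ht => ht.1)) ?_ hS0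
    intro t ht htG hSt
    refine ⟨_, ?_, hds t ht.1 htG⟩
    have hIubd : I t ≤ max MI 0 := by
      have h := hMI t ⟨ht.1.le, ht.2.le⟩
      rw [Real.norm_eq_abs] at h
      linarith [(abs_le.1 h).2, le_max_left MI 0]
    have hcQ : 0 ≤ c (ξ t) * (N - S t - I t) :=
      mul_nonneg (hc _).le (by linarith [hPle t ht.1.le])
    linarith [mul_nonneg (mul_nonneg (ha (ξ t)).le hSt) (sub_nonneg.2 hIubd),
      mul_nonneg (mul_nonneg (sub_nonneg.2 (haσ (ξ t))) hSt) (le_max_right MI 0), hcQ]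
  have hIleN : ∀ t, 0 ≤ t → I t ≤ N := fun t ht => by linarith [hPle t ht, hSpos t ht]
  have hSleN : ∀ t, 0 ≤ t → S t ≤ N := fun t ht => by linarith [hPle t ht, hIpos t ht]
  
  -- Stage 4 : the Lyapunov function V
  obtain ⟨L, hLdef⟩ : ∃ L : ℝ, L = Real.log δ := ⟨_, rfl⟩
  obtain ⟨U, hUdef⟩ : ∃ U : ℝ, U = Real.log N + α * N := ⟨_, rfl⟩
  have hVcont : ContinuousOn (fun t => Real.log (I t) + α * (S t + I t)) (Set.Ici 0) :=
    (hIcont.log fun t ht => (hIpos t ht).ne').add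
      (continuousOn_const.mul (hScont.add hIcont))
  have hVU : ∀ t, (0:ℝ) ≤ t → Real.log (I t) + α * (S t + I t) ≤ U := by
    intro t ht
    have h1 : Real.log (I t) ≤ Real.log N := (Real.log_le_log_iff (hIpos t ht) hN).2 (hIleN t ht)
    have h2 : α * (S t + I t) ≤ α * N := mul_le_mul_of_nonneg_left (hPle t ht) hα0.le
    rw [hUdef]; linarith
  have hVcond : ∀ t, 0 < t → t ∈ {t : ℝ | ContPt ξ t} →
      (fun t => Real.log (I t) + α * (S t + I t)) t < L →
      ∃ d, m / 2 ≤ d ∧ HasDerivAt (fun t => Real.log (I t) + α * (S t + I t)) d t := by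
    intro t ht htG hVt
    have hVt' : Real.log (I t) + α * (S t + I t) < L := hVt
    have hIt := hIpos t ht.le
    have hSt := hSpos t ht.le
    have hPt := hPle t ht.le
    have hIδ : I t < δ := by
      have hαP : 0 < α * (S t + I t) := mul_pos hα0 (by linarith)
      have h1 : Real.log (I t) < Real.log δ := by rw [← hLdef]; linarith
      exact (Real.log_lt_log_iff hIt hδ0).1 h1
    have hDlog : HasDerivAt (fun t => Real.log (I t))
        ((a (ξ t) * S t * I t - b (ξ t) * I t) / I t) t := (hdi t ht htG).log hIt.ne'
    have hD : HasDerivAt (fun t => Real.log (I t) + α * (S t + I t))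
        ((a (ξ t) * S t * I t - b (ξ t) * I t) / I t
          + α * ((-(a (ξ t) * S t * I t) + c (ξ t) * (N - S t - I t))
            + (a (ξ t) * S t * I t - b (ξ t) * I t))) t :=
      hDlog.add (((hds t ht htG).add (hdi t ht htG)).const_mul α)
    refine ⟨_, ?_, hD⟩
    have hdiv : (a (ξ t) * S t * I t - b (ξ t) * I t) / I t = a (ξ t) * S t - b (ξ t) := by
      field_simp
    rw [hdiv]
    have e0 : b (ξ t) + m ≤ α * c (ξ t) * N := hαc (ξ t)
    have e1 : 0 ≤ (a (ξ t) * N - b (ξ t) - m) * (S t + I t) :=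
      mul_nonneg (by linarith [hmσ (ξ t)]) (by linarith)
    have e2 : 0 ≤ (α * c (ξ t) * N - b (ξ t) - m) * (N - (S t + I t)) :=
      mul_nonneg (by linarith) (by linarith)
    have e12 : 0 ≤ N * (a (ξ t) * (S t + I t) + α * c (ξ t) * (N - (S t + I t))
        - b (ξ t) - m) := by linarith [add_nonneg e1 e2]
    have e5 : m ≤ a (ξ t) * (S t + I t) + α * c (ξ t) * (N - (S t + I t)) - b (ξ t) := by
      have h := le_of_mul_le_mul_left (by linarith : N * 0 ≤ N * (a (ξ t) * (S t + I t)
        + α * c (ξ t) * (N - (S t + I t)) - b (ξ t) - m)) hN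
      linarith
    have hKσ : a (ξ t) + α * b (ξ t) ≤ K := by
      rw [hKdef]
      linarith [mul_le_mul_of_nonneg_left (hbσ (ξ t)) hα0.le, haσ (ξ t)]
    have e3 : (a (ξ t) + α * b (ξ t)) * I t ≤ K * δ :=
      calc (a (ξ t) + α * b (ξ t)) * I t ≤ K * I t :=
            mul_le_mul_of_nonneg_right hKσ hIt.le
        _ ≤ K * δ := mul_le_mul_of_nonneg_left hIδ.le hK0.le
    have e4 : K * δ = m / 2 := by
      rw [hδdef]
      field_simp
    linarith [e5, e3, e4]
  obtain ⟨t₀, ht₀0, hVt₀⟩ := persist_good Gfin (L := L) (U := U) (μ := m / 2) (x := 0)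
    (by linarith) le_rfl hVcont (fun t ht => hVU t ht) hVcond
  have hIε₁ : ∀ t, t₀ ≤ t → ε₁ ≤ I t := by
    intro t ht
    have ht0 : (0:ℝ) ≤ t := ht₀0.trans ht
    have hV : L ≤ Real.log (I t) + α * (S t + I t) := hVt₀ t ht
    have h2 : α * (S t + I t) ≤ α * N := mul_le_mul_of_nonneg_left (hPle t ht0) hα0.le
    calc ε₁ = Real.exp (Real.log δ + -(α * N)) := by
          rw [Real.exp_add, Real.exp_log hδ0, hε₁def]
      _ ≤ Real.exp (Real.log (I t)) := Real.exp_le_exp.2 (by rw [hLdef] at hV; linarith)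
      _ = I t := Real.exp_log (hIpos t ht0)
  -- Stage 5 : N - (S+I) eventually at least q
  have hQcont : ContinuousOn (fun t => N - (S t + I t)) (Set.Ici 0) :=
    continuousOn_const.sub (hScont.add hIcont)
  have hQcond : ∀ t, t₀ < t → t ∈ {t : ℝ | ContPt ξ t} →
      (fun t => N - (S t + I t)) t < q →
      ∃ d, bm * ε₁ / 2 ≤ d ∧ HasDerivAt (fun t => N - (S t + I t)) d t := by
    intro t ht htG hQt
    have ht0 : (0:ℝ) < t := lt_of_le_of_lt ht₀0 ht
    have hQt' : N - (S t + I t) < q := hQt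
    have hQ0 : 0 ≤ N - (S t + I t) := by linarith [hPle t ht0.le]
    have hIt : ε₁ ≤ I t := hIε₁ t ht.le
    refine ⟨b (ξ t) * I t - c (ξ t) * (N - S t - I t), ?_, ?_⟩
    · have h1 : c (ξ t) * (N - S t - I t) ≤ CM * q := by
        calc c (ξ t) * (N - S t - I t) ≤ CM * (N - S t - I t) :=
              mul_le_mul_of_nonneg_right (hcσu _) (by linarith)
          _ ≤ CM * q := mul_le_mul_of_nonneg_left (by linarith) hCM0.le
      have h2 : bm * ε₁ ≤ b (ξ t) * I t :=
        mul_le_mul (hbmσ _) hIt hε₁0.le (hb _).le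
      have h3 : CM * q = bm * ε₁ / 2 := by
        rw [hqdef]
        field_simp
      linarith
    · have hD := (hasDerivAt_const t N).sub ((hds t ht0 htG).add (hdi t ht0 htG))
      exact hD.congr_deriv (by ring)
  obtain ⟨t₁, ht₁, hQev⟩ := persist_good Gfin (L := q) (U := N) (μ := bm * ε₁ / 2) (x := t₀)
    (div_pos (mul_pos hbm0 hε₁0) two_pos) ht₀0 hQcont
    (fun t ht => by
      have ht0 : (0:ℝ) ≤ t := ht₀0.trans ht
      have h1 := hSpos t ht0
      have h2 := hIpos t ht0
      show N - (S t + I t) ≤ N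
      linarith)
    hQcond
  -- Stage 6 : S eventually at least sstar
  have hScond : ∀ t, t₁ < t → t ∈ {t : ℝ | ContPt ξ t} → S t < sstar →
      ∃ d, Cm * q / 2 ≤ d ∧ HasDerivAt S d t := by
    intro t ht htG hSt
    have ht0 : (0:ℝ) < t := lt_of_le_of_lt (ht₀0.trans ht₁) ht
    have hSt' : S t < sstar := hSt
    have hS0t : 0 < S t := hSpos t ht0.le
    have hI0t : 0 < I t := hIpos t ht0.le
    have hIN : I t ≤ N := hIleN t ht0.le
    have hQt : q ≤ N - (S t + I t) := hQev t ht.le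
    refine ⟨_, ?_, hds t ht0 htG⟩
    have h1 : Cm * q ≤ c (ξ t) * (N - S t - I t) := by
      calc Cm * q ≤ Cm * (N - S t - I t) :=
            mul_le_mul_of_nonneg_left (by linarith) hCm0.le
        _ ≤ c (ξ t) * (N - S t - I t) :=
            mul_le_mul_of_nonneg_right (hcσl _) (by linarith)
    have h2a : a (ξ t) * S t * I t ≤ A * (S t * I t) := by
      linarith [mul_le_mul_of_nonneg_right (haσ (ξ t)) (mul_nonneg hS0t.le hI0t.le)]
    have h2b : S t * I t ≤ S t * N := mul_le_mul_of_nonneg_left hIN hS0t.le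
    have h2c : S t * N ≤ sstar * N := mul_le_mul_of_nonneg_right hSt'.le hN.le
    have h2d : A * (S t * I t) ≤ A * (sstar * N) :=
      mul_le_mul_of_nonneg_left (by linarith) hA0.le
    have h2 : a (ξ t) * S t * I t ≤ A * N * sstar := by linarith [h2a, h2d]
    have h3 : A * N * sstar = Cm * q / 2 := by
      rw [hsdef]
      have hAN : A * N ≠ 0 := (mul_pos hA0 hN).ne'
      field_simp
    linarith
  obtain ⟨t₂, ht₂, hSev'⟩ := persist_good Gfin (L := sstar) (U := N) (μ := Cm * q / 2) (x := t₁)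
    (div_pos (mul_pos hCm0 hq0) two_pos) (ht₀0.trans ht₁) hScont
    (fun t ht => hSleN t ((ht₀0.trans ht₁).trans ht))
    hScond
  -- Final assembly
  have hIev : ∀ᶠ t in atTop, ε₁ ≤ I t := eventually_atTop.2 ⟨t₀, hIε₁⟩
  have hIevN : ∀ᶠ t in atTop, I t ≤ N := eventually_atTop.2 ⟨0, fun t ht => hIleN t ht⟩
  have hSev : ∀ᶠ t in atTop, sstar ≤ S t := eventually_atTop.2 ⟨t₂, fun t ht => hSev' t ht⟩
  have hSevN : ∀ᶠ t in atTop, S t ≤ N := eventually_atTop.2 ⟨0, fun t ht => hSleN t ht⟩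
  have hIbd : IsBoundedUnder (· ≤ ·) atTop I := isBoundedUnder_of_eventually_le hIevN
  have hIbd' : IsBoundedUnder (· ≥ ·) atTop I := isBoundedUnder_of_eventually_ge hIev
  have hSbd : IsBoundedUnder (· ≤ ·) atTop S := isBoundedUnder_of_eventually_le hSevN
  have hSbd' : IsBoundedUnder (· ≥ ·) atTop S := isBoundedUnder_of_eventually_ge hSev
  have hliI : ε₁ ≤ liminf I atTop := le_liminf_of_le hIbd.isCoboundedUnder_ge hIev
  have hlsI : limsup I atTop ≤ N := limsup_le_of_le hIbd'.isCoboundedUnder_le hIevN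
  have hliS : sstar ≤ liminf S atTop := le_liminf_of_le hSbd.isCoboundedUnder_ge hSev
  have hlsS : limsup S atTop ≤ N := limsup_le_of_le hSbd'.isCoboundedUnder_le hSevN
  have hIll : liminf I atTop ≤ limsup I atTop := liminf_le_limsup hIbd hIbd'
  have hSll : liminf S atTop ≤ limsup S atTop := liminf_le_limsup hSbd hSbd'
  have hεmin : ε = min (min ε₁ sstar) (1 / N) / 2 := hεdef
  have hεe1 : ε < ε₁ := by
    have h1 : min (min ε₁ sstar) (1 / N) ≤ ε₁ := (min_le_left _ _).trans (min_le_left _ _)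
    rw [hεmin]; linarith
  have hεs : ε ≤ sstar := by
    have h1 : min (min ε₁ sstar) (1 / N) ≤ sstar := (min_le_left _ _).trans (min_le_right _ _)
    rw [hεmin]; linarith
  have hεN : N ≤ 1 / ε := by
    have h1 : ε ≤ 1 / N := by
      have := min_le_right (min ε₁ sstar) (1 / N)
      have h2 : 0 < (1:ℝ) / N := one_div_pos.2 hN
      rw [hεmin]; linarith
    have h2 := one_div_le_one_div_of_le hε0 h1
    rwa [one_div_one_div] at h2
  exact ⟨by linarith, ⟨by linarith, hSll, by linarith⟩, ⟨by linarith, hIll, by linarith⟩⟩
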